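/- Let (Ω,μ) be a probability space, p ∈ L¹(μ) a probability density, and S ⊆ Ω measurable with ∫_S p dμ > 0. Let p|_S = (χ_S p)/∫_S p dμ be the Bayesian conditional density. Then Γ(p|_S) = Γ(p)|_{π χ_S}; that is, quantum conditioning of Γ(p) by the effect π χ_S (multiplication by the indicator of S) agrees with the embedding of the classically conditioned density. -/

import Mathlib

open MeasureTheory

/-- Quantum conditioning of the pure state `Γ(p) = ⟨√p,·⟩√p` by the effect
`π χ_S` (multiplication by the indicator of `S`, which is a projection, hence its own square
root) agrees with the embedding of the Bayesian conditional density
`p|_S = (χ_S p)/∫_S p dμ`: i.e. `Γ(p|_S) = Γ(p)|_{π χ_S}`, as operators on `L²(μ)`.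
Concretely, for every `g ∈ L²(μ)`,
`⟨√(p|_S), g⟩ √(p|_S) = (⟨χ_S √p, g⟩ χ_S √p) / tr`, where `tr = ∫_S p dμ = ‖χ_S √p‖²`. -/
theorem quantum_bayes_classical_compatibility
    {Ω : Type*} [MeasurableSpace Ω] (μ : Measure Ω) [IsProbabilityMeasure μ]
    (p : Ω → ℝ) (hint : Integrable p μ) (hpos : ∀ᵐ ω ∂μ, 0 ≤ p ω)
    (hnorm : ∫ ω, p ω ∂μ = 1)
    (S : Set Ω) (hS : MeasurableSet S) (hpS : 0 < ∫ ω in S, p ω ∂μ) :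
    ∀ g : Ω → ℂ, MemLp g 2 μ →
      (fun ω => (∫ x, (starRingEnd ℂ)
            ((Real.sqrt (S.indicator p x / ∫ y in S, p y ∂μ) : ℂ)) * g x ∂μ) *
          (Real.sqrt (S.indicator p ω / ∫ y in S, p y ∂μ) : ℂ))
        =ᵐ[μ]
      (fun ω => ((∫ x, (starRingEnd ℂ)
            (S.indicator (fun y => (Real.sqrt (p y) : ℂ)) x) * g x ∂μ) *
          S.indicator (fun y => (Real.sqrt (p y) : ℂ)) ω) / ((∫ y in S, p y ∂μ : ℝ) : ℂ)) := by
  intro g hg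
  set c : ℝ := ∫ y in S, p y ∂μ with hc
  have hcpos : 0 < c := hpS
  have hsc : 0 < Real.sqrt c := Real.sqrt_pos.mpr hcpos
  have hscne : (Real.sqrt c : ℂ) ≠ 0 := by
    exact_mod_cast (ne_of_gt hsc)
  -- pointwise identity for the square roots
  have key : ∀ ω, (Real.sqrt (S.indicator p ω / c) : ℂ)
      = S.indicator (fun y => (Real.sqrt (p y) : ℂ)) ω / (Real.sqrt c : ℂ) := by
    intro ω
    by_cases hω : ω ∈ S
    · rw [Set.indicator_of_mem hω, Set.indicator_of_mem hω]
      by_cases hp : 0 ≤ p ω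
      · rw [Real.sqrt_div hp]
        push_cast
        ring
      · have h1 : p ω / c < 0 := div_neg_of_neg_of_pos (lt_of_not_ge hp) hcpos
        rw [Real.sqrt_eq_zero_of_nonpos h1.le, Real.sqrt_eq_zero_of_nonpos (le_of_not_ge hp)]
        simp
    · rw [Set.indicator_of_notMem hω, Set.indicator_of_notMem hω]
      simp
  refine Filter.Eventually.of_forall fun ω => ?_
  simp only [key]
  have hconj : ∀ x, (starRingEnd ℂ)
      (S.indicator (fun y => (Real.sqrt (p y) : ℂ)) x / (Real.sqrt c : ℂ))
      = (starRingEnd ℂ) (S.indicator (fun y => (Real.sqrt (p y) : ℂ)) x) / (Real.sqrt c : ℂ) := by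
    intro x
    rw [map_div₀, Complex.conj_ofReal]
  simp only [hconj, div_mul_eq_mul_div]
  rw [integral_div]
  rw [div_mul_div_comm]
  congr 1
  rw [← Complex.ofReal_mul, Real.mul_self_sqrt hcpos.le]
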